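/- Let D, k be positive integers and n divisible by D. Construct G on n vertices as follows: partition the vertices into n/D layers of D vertices each, and join every vertex in layer i to every vertex in layer i+1 for 1 ≤ i < n/D. Then G has minimum degree at least D, and for any (k,1)-contraction C of G (i.e., dist_{ℓ_C}(u,v) ≥ dist(u,v)/k − 1 for all u,v), every connected component of (V,C) meets at most k+1 layers; hence G/C has at least n/((k+1)D) vertices. -/

import Mathlib

open Classical

noncomputable def walkLen {V : Type*} (G : SimpleGraph V) (ℓ : Sym2 V → ℝ)
    {u v : V} (w : G.Walk u v) : ℝ := (w.edges.map ℓ).sum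

noncomputable def gdist {V : Type*} (G : SimpleGraph V) (ℓ : Sym2 V → ℝ) (u v : V) : ℝ :=
  sInf {x : ℝ | ∃ w : G.Walk u v, walkLen G ℓ w = x}

noncomputable def zeroOn {V : Type*} (ℓ : Sym2 V → ℝ) (C : Set (Sym2 V)) : Sym2 V → ℝ :=
  fun e => if e ∈ C then 0 else ℓ e

section aux

variable {L D : ℕ}

abbrev LG (L D : ℕ) : SimpleGraph (Fin L × Fin D) :=
  SimpleGraph.fromRel (fun x y => x.1.val + 1 = y.1.val)

lemma layer_adj (i j : Fin L) (d d' : Fin D) (h : i.val + 1 = j.val) :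
    (LG L D).Adj (i, d) (j, d') := by
  rw [SimpleGraph.fromRel_adj]
  refine ⟨?_, Or.inl h⟩
  intro hc
  have : i = j := congrArg Prod.fst hc
  have := congrArg Fin.val this
  omega

lemma layer_adj_iff {x y : Fin L × Fin D} (h : (LG L D).Adj x y) :
    ((x.1.val : ℤ) - y.1.val).natAbs = 1 := by
  rw [SimpleGraph.fromRel_adj] at h
  rcases h.2 with h | h <;> omega

lemma reach_same (hL : 2 ≤ L) (i : Fin L) (d d' : Fin D) :
    (LG L D).Reachable (i, d) (i, d') := by
  by_cases hdd : d = d'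
  · subst hdd; rfl
  by_cases hi : i.val + 1 < L
  · have h1 : (LG L D).Adj (i, d) (⟨i.val + 1, hi⟩, d) := layer_adj _ _ _ _ rfl
    have h2 : (LG L D).Adj (i, d') (⟨i.val + 1, hi⟩, d) := layer_adj _ _ _ _ rfl
    exact h1.reachable.trans h2.reachable.symm
  · have hi0 : 0 < i.val := by omega
    have hlt : i.val - 1 < L := by omega
    have h1 : (LG L D).Adj (⟨i.val - 1, hlt⟩, d) (i, d) := layer_adj _ _ _ _ (by simp; omega)
    have h2 : (LG L D).Adj (⟨i.val - 1, hlt⟩, d) (i, d') := layer_adj _ _ _ _ (by simp; omega)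
    exact h1.reachable.symm.trans h2.reachable

lemma reach_up (hL : 2 ≤ L) : ∀ (m : ℕ) (i j : Fin L) (d d' : Fin D),
    i.val + m = j.val → (LG L D).Reachable (i, d) (j, d') := by
  intro m
  induction m with
  | zero =>
    intro i j d d' h
    have : i = j := Fin.ext (by omega)
    subst this
    exact reach_same hL i d d'
  | succ m ih =>
    intro i j d d' h
    have hlt : i.val + 1 < L := by have := j.isLt; omega
    have h1 : (LG L D).Adj (i, d) (⟨i.val + 1, hlt⟩, d) := layer_adj _ _ _ _ rfl
    exact h1.reachable.trans (ih ⟨i.val + 1, hlt⟩ j d d' (by simp; omega))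

lemma reach_all (hL : 2 ≤ L) (u v : Fin L × Fin D) : (LG L D).Reachable u v := by
  rcases u with ⟨i, d⟩; rcases v with ⟨j, d'⟩
  rcases le_or_gt i.val j.val with h | h
  · exact reach_up hL (j.val - i.val) i j d d' (by omega)
  · exact (reach_up hL (i.val - j.val) j i d' d (by omega)).symm

lemma walk_length_lb {u v : Fin L × Fin D} (w : (LG L D).Walk u v) :
    ((u.1.val : ℤ) - v.1.val).natAbs ≤ w.length := by
  induction w with
  | nil => simp
  | @cons a b c h p ih =>
    have h1 := layer_adj_iff h
    have tri : ((a.1.val : ℤ) - c.1.val).natAbs ≤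
        ((a.1.val : ℤ) - b.1.val).natAbs + ((b.1.val : ℤ) - c.1.val).natAbs := by
      omega
    simp only [SimpleGraph.Walk.length_cons]
    omega

lemma walkLen_const_one {V : Type*} (G : SimpleGraph V) {u v : V} (w : G.Walk u v) :
    walkLen G (fun _ => (1 : ℝ)) w = w.length := by
  unfold walkLen
  rw [← w.length_edges]
  induction w.edges with
  | nil => simp
  | cons e t ih => simp only [List.map_cons, List.sum_cons, List.length_cons, ih]; push_cast; ring

lemma walkLen_nonneg {V : Type*} (G : SimpleGraph V) {ℓ : Sym2 V → ℝ}
    (hℓ : ∀ e, 0 ≤ ℓ e) {u v : V} (w : G.Walk u v) : 0 ≤ walkLen G ℓ w := by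
  unfold walkLen
  apply List.sum_nonneg
  intro x hx
  rcases List.mem_map.mp hx with ⟨e, _, rfl⟩
  exact hℓ e

lemma zeroOn_nonneg {V : Type*} (C : Set (Sym2 V)) (e : Sym2 V) :
    0 ≤ zeroOn (fun _ => (1 : ℝ)) C e := by
  unfold zeroOn; split <;> norm_num

lemma gdist_bddBelow {V : Type*} (G : SimpleGraph V) {ℓ : Sym2 V → ℝ}
    (hℓ : ∀ e, 0 ≤ ℓ e) (u v : V) :
    BddBelow {x : ℝ | ∃ w : G.Walk u v, walkLen G ℓ w = x} := by
  refine ⟨0, ?_⟩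
  rintro x ⟨w, rfl⟩
  exact walkLen_nonneg G hℓ w

lemma gdist_one_lb (hL : 2 ≤ L) (u v : Fin L × Fin D) :
    (((u.1.val : ℤ) - v.1.val).natAbs : ℝ) ≤ gdist (LG L D) (fun _ => (1 : ℝ)) u v := by
  apply le_csInf
  · obtain ⟨w⟩ := reach_all hL u v
    exact ⟨_, w, rfl⟩
  · rintro x ⟨w, rfl⟩
    rw [walkLen_const_one]
    exact_mod_cast walk_length_lb w

lemma gdist_zero_le (C : Set (Sym2 (Fin L × Fin D))) (hC : C ⊆ (LG L D).edgeSet)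
    {u v : Fin L × Fin D} (h : (SimpleGraph.fromEdgeSet C).Reachable u v) :
    gdist (LG L D) (zeroOn (fun _ => (1 : ℝ)) C) u v ≤ 0 := by
  obtain ⟨p⟩ := h
  have hle : SimpleGraph.fromEdgeSet C ≤ LG L D := by
    rw [← SimpleGraph.fromEdgeSet_edgeSet (LG L D)]
    exact SimpleGraph.fromEdgeSet_mono hC
  set w := p.mapLe hle with hw
  have hedges : w.edges = p.edges := by
    simp only [hw, SimpleGraph.Walk.mapLe, SimpleGraph.Walk.edges_map]
    have : ⇑(SimpleGraph.Hom.ofLE hle) = id := rfl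
    simp [this, Sym2.map_id]
  have hzero : walkLen (LG L D) (zeroOn (fun _ => (1 : ℝ)) C) w = 0 := by
    unfold walkLen
    apply List.sum_eq_zero
    intro x hx
    rcases List.mem_map.mp hx with ⟨e, he, rfl⟩
    rw [hedges] at he
    have := p.edges_subset_edgeSet he
    rw [SimpleGraph.edgeSet_fromEdgeSet] at this
    simp only [zeroOn, if_pos this.1]
  exact csInf_le (gdist_bddBelow _ (zeroOn_nonneg C) u v) ⟨w, hzero⟩

lemma key_diam (hL : 2 ≤ L) {k : ℕ} (hk : 0 < k)
    (C : Set (Sym2 (Fin L × Fin D))) (hC : C ⊆ (LG L D).edgeSet)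
    (hyp : ∀ u v, gdist (LG L D) (fun _ => (1 : ℝ)) u v / k - 1 ≤
        gdist (LG L D) (zeroOn (fun _ => (1 : ℝ)) C) u v)
    {u v : Fin L × Fin D} (h : (SimpleGraph.fromEdgeSet C).Reachable u v) :
    ((u.1.val : ℤ) - v.1.val).natAbs ≤ k := by
  have h1 := gdist_one_lb hL u v
  have h2 := gdist_zero_le C hC h
  have h3 := hyp u v
  have hk' : (0 : ℝ) < k := by exact_mod_cast hk
  have : (((u.1.val : ℤ) - v.1.val).natAbs : ℝ) / k - 1 ≤ 0 := by
    calc (((u.1.val : ℤ) - v.1.val).natAbs : ℝ) / k - 1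
        ≤ gdist (LG L D) (fun _ => (1 : ℝ)) u v / k - 1 := by
          gcongr
      _ ≤ gdist (LG L D) (zeroOn (fun _ => (1 : ℝ)) C) u v := h3
      _ ≤ 0 := h2
  have : (((u.1.val : ℤ) - v.1.val).natAbs : ℝ) ≤ k := by
    rw [sub_nonpos, div_le_one hk'] at this
    exact this
  exact_mod_cast this

end aux

theorem layered_graph_lower_bound (D k L : ℕ) (hD : 0 < D) (hk : 0 < k) (hL : 2 ≤ L)
    (G : SimpleGraph (Fin L × Fin D))
    (hG : G = SimpleGraph.fromRel (fun x y => x.1.val + 1 = y.1.val)) :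
    (∀ v, D ≤ G.degree v) ∧
    ∀ C : Set (Sym2 (Fin L × Fin D)), C ⊆ G.edgeSet →
      (∀ u v, gdist G (fun _ => (1 : ℝ)) u v / k - 1 ≤
          gdist G (zeroOn (fun _ => (1 : ℝ)) C) u v) →
      ((∀ u v, (SimpleGraph.fromEdgeSet C).Reachable u v →
          ((u.1.val : ℤ) - v.1.val).natAbs ≤ k) ∧
       ((L : ℝ) / (k + 1) ≤ Nat.card ((SimpleGraph.fromEdgeSet C).ConnectedComponent))) := by
  subst hG
  constructor
  · intro v
    have hdeg : (Finset.univ : Finset (Fin D)).card ≤ (LG L D).degree v := by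
      unfold SimpleGraph.degree
      rcases lt_or_ge (v.1.val + 1) L with h | h
      · apply Finset.card_le_card_of_injOn (fun d => ((⟨v.1.val + 1, h⟩ : Fin L), d))
        · intro d _
          rw [Finset.mem_coe, SimpleGraph.mem_neighborFinset]
          exact layer_adj v.1 _ v.2 d rfl
        · intro a _ b _ hab
          exact congrArg Prod.snd hab
      · have h1 : 0 < v.1.val := by have := v.1.isLt; omega
        have hlt : v.1.val - 1 < L := by omega
        apply Finset.card_le_card_of_injOn (fun d => ((⟨v.1.val - 1, hlt⟩ : Fin L), d))
        · intro d _
          rw [Finset.mem_coe, SimpleGraph.mem_neighborFinset]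
          exact (layer_adj (⟨v.1.val - 1, hlt⟩ : Fin L) v.1 d v.2 (by simp; omega)).symm
        · intro a _ b _ hab
          exact congrArg Prod.snd hab
    simp at hdeg
    convert hdeg
  · intro C hC hyp
    have hdiam : ∀ u v, (SimpleGraph.fromEdgeSet C).Reachable u v →
        ((u.1.val : ℤ) - v.1.val).natAbs ≤ k := fun u v h => key_diam hL hk C hC hyp h
    refine ⟨hdiam, ?_⟩
    haveI : Fintype ((SimpleGraph.fromEdgeSet C).ConnectedComponent) := Fintype.ofFinite _
    set f : Fin L → (SimpleGraph.fromEdgeSet C).ConnectedComponent :=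
      fun i => (SimpleGraph.fromEdgeSet C).connectedComponentMk (i, ⟨0, hD⟩) with hf
    have hcard : L ≤ (k + 1) * (Finset.univ.image f).card := by
      have key := Finset.card_le_mul_card_image (f := f) Finset.univ (k + 1) ?_
      · simpa using key
      · intro c _
        set t := Finset.univ.filter (fun i => f i = c) with ht
        rcases Finset.eq_empty_or_nonempty t with h0 | hne
        · simp [h0]
        · set m := t.min' hne with hm
          have hmem : ∀ j ∈ t, m.val ≤ j.val ∧ j.val ≤ m.val + k := by
            intro j hj
            have hmj : m ≤ j := t.min'_le j hj
            have hmt : m ∈ t := t.min'_mem hne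
            have hfm : f m = c := (Finset.mem_filter.mp hmt).2
            have hfj : f j = c := (Finset.mem_filter.mp hj).2
            have hr : (SimpleGraph.fromEdgeSet C).Reachable (j, ⟨0, hD⟩) (m, ⟨0, hD⟩) :=
              SimpleGraph.ConnectedComponent.eq.mp (hfj.trans hfm.symm)
            have hab := hdiam _ _ hr
            simp only at hab
            have hmj' : m.val ≤ j.val := hmj
            omega
          calc t.card ≤ (Finset.Icc m.val (m.val + k)).card := by
                apply Finset.card_le_card_of_injOn Fin.val
                · intro j hj; rw [Finset.mem_coe, Finset.mem_Icc]; exact hmem j hj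
                · intro a _ b _ hab; exact Fin.ext hab
            _ = k + 1 := by rw [Nat.card_Icc]; omega
    have himg : (Finset.univ.image f).card ≤
        Nat.card ((SimpleGraph.fromEdgeSet C).ConnectedComponent) := by
      rw [Nat.card_eq_fintype_card]
      exact Finset.card_le_univ _
    have hfin : L ≤ (k + 1) * Nat.card ((SimpleGraph.fromEdgeSet C).ConnectedComponent) :=
      le_trans hcard (Nat.mul_le_mul_left _ himg)
    rw [div_le_iff₀ (by positivity)]
    have : (L : ℝ) ≤ ((k + 1) * Nat.card ((SimpleGraph.fromEdgeSet C).ConnectedComponent) : ℕ) := by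
      exact_mod_cast hfin
    push_cast at this ⊢
    linarith
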